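/- For every n ≥ 1, the number of equivalence classes of n × n Erdős matrices is at least p(n), the number of integer partitions of n: there exist at least p(n) n × n Erdős matrices that are pairwise non-equivalent. -/

import Mathlib

open Matrix BigOperators

def IsBistochastic {n : ℕ} (A : Matrix (Fin n) (Fin n) ℝ) : Prop :=
  (∀ i j, 0 ≤ A i j) ∧ (∀ i, ∑ j, A i j = 1) ∧ (∀ j, ∑ i, A i j = 1)

noncomputable def maxTr {n : ℕ} (A : Matrix (Fin n) (Fin n) ℝ) : ℝ :=
  ⨆ σ : Equiv.Perm (Fin n), ∑ i, A i (σ i)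

def frobSq {n : ℕ} (A : Matrix (Fin n) (Fin n) ℝ) : ℝ :=
  ∑ i, ∑ j, (A i j) ^ 2

def IsErdos {n : ℕ} (A : Matrix (Fin n) (Fin n) ℝ) : Prop :=
  IsBistochastic A ∧ frobSq A = maxTr A

def IsPermMatrix {n : ℕ} (P : Matrix (Fin n) (Fin n) ℝ) : Prop :=
  ∃ σ : Equiv.Perm (Fin n), P = σ.permMatrix ℝ

/-- `A` and `B` are equivalent if `A = P B Q` for some permutation matrices `P, Q`. -/
def MatEquiv {n : ℕ} (A B : Matrix (Fin n) (Fin n) ℝ) : Prop :=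
  ∃ P Q : Matrix (Fin n) (Fin n) ℝ, IsPermMatrix P ∧ IsPermMatrix Q ∧ A = P * B * Q

/-- For every `n ≥ 1` there are at least `p(n)` pairwise non-equivalent `n × n`
Erdős matrices, where `p(n)` is the number of partitions of `n`. -/
lemma sum_fin_get {M : Type*} [AddCommMonoid M] (L : List ℕ) (f : ℕ → M) :
    ∑ k : Fin L.length, f (L.get k) = (L.map f).sum := by
  rw [← List.sum_ofFn]
  congr 1
  have : List.map f (List.ofFn L.get) = List.ofFn (f ∘ L.get) := List.map_ofFn
  rw [List.ofFn_get] at this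
  rw [this, Function.comp_def]

lemma sum_fin_get' (L : List ℕ) : ∑ k : Fin L.length, L.get k = L.sum := by
  simpa using sum_fin_get L id

noncomputable def blockEquiv {n : ℕ} (L : List ℕ) (h : L.sum = n) :
    Fin n ≃ Σ k : Fin L.length, Fin (L.get k) := by
  apply Fintype.equivOfCardEq
  rw [Fintype.card_fin, Fintype.card_sigma]
  simp only [Fintype.card_fin]
  rw [sum_fin_get' L, h]

lemma fiber_card {n : ℕ} (L : List ℕ) (h : L.sum = n) (k : Fin L.length) :
    (Finset.univ.filter fun j : Fin n => ((blockEquiv L h j).1 = k)).card = L.get k := by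
  classical
  rw [Finset.card_filter]
  rw [← Equiv.sum_comp (blockEquiv L h).symm (fun j : Fin n => if ((blockEquiv L h j).1 = k) then 1 else 0)]
  simp only [Equiv.apply_symm_apply]
  rw [← Finset.univ_sigma_univ, Finset.sum_sigma]
  trans (∑ a : Fin L.length, if a = k then L.get a else 0)
  · exact Finset.sum_congr rfl fun a _ => by split <;> simp_all
  · simp

noncomputable def blockMat {n : ℕ} (L : List ℕ) (h : L.sum = n) : Matrix (Fin n) (Fin n) ℝ :=
  fun i j => if (blockEquiv L h i).1 = (blockEquiv L h j).1
    then ((L.get (blockEquiv L h i).1 : ℝ))⁻¹ else 0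

lemma blockMat_row_sum {n : ℕ} (L : List ℕ) (h : L.sum = n) (hpos : ∀ x ∈ L, 0 < x) (i : Fin n) :
    ∑ j, blockMat L h i j = 1 := by
  classical
  set k := (blockEquiv L h i).1 with hk
  have hLk : 0 < L.get k := hpos _ (L.get_mem _)
  calc ∑ j, blockMat L h i j
      = ∑ j ∈ Finset.univ.filter (fun j : Fin n => (blockEquiv L h j).1 = k),
          ((L.get k : ℝ))⁻¹ := by
        rw [Finset.sum_filter]
        apply Finset.sum_congr rfl
        intro j _
        simp only [blockMat, ← hk]
        by_cases hj : (blockEquiv L h j).1 = k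
        · rw [if_pos hj.symm, if_pos hj]
        · rw [if_neg (fun h' => hj h'.symm), if_neg hj]
    _ = (L.get k : ℝ) * ((L.get k : ℝ))⁻¹ := by
        rw [Finset.sum_const, fiber_card, nsmul_eq_mul]
    _ = 1 := by
        rw [mul_inv_cancel₀]
        exact_mod_cast hLk.ne'

lemma blockMat_symm {n : ℕ} (L : List ℕ) (h : L.sum = n) (i j : Fin n) :
    blockMat L h i j = blockMat L h j i := by
  unfold blockMat
  by_cases hij : (blockEquiv L h i).1 = (blockEquiv L h j).1
  · rw [if_pos hij, if_pos hij.symm, hij]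
  · rw [if_neg hij, if_neg (fun h' => hij h'.symm)]

lemma blockMat_nonneg {n : ℕ} (L : List ℕ) (h : L.sum = n) (i j : Fin n) :
    0 ≤ blockMat L h i j := by
  unfold blockMat
  split
  · positivity
  · exact le_refl 0

lemma blockMat_diag {n : ℕ} (L : List ℕ) (h : L.sum = n) (i : Fin n) :
    blockMat L h i i = ((L.get (blockEquiv L h i).1 : ℝ))⁻¹ := by
  simp [blockMat]

lemma blockMat_le_diag {n : ℕ} (L : List ℕ) (h : L.sum = n) (i j : Fin n) :
    blockMat L h i j ≤ blockMat L h i i := by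
  rw [blockMat_diag]
  unfold blockMat
  split
  · exact le_refl _
  · positivity

lemma blockMat_rowsq {n : ℕ} (L : List ℕ) (h : L.sum = n) (hpos : ∀ x ∈ L, 0 < x) (i : Fin n) :
    ∑ j, (blockMat L h i j) ^ 2 = blockMat L h i i := by
  classical
  set k := (blockEquiv L h i).1 with hk
  have hLk : 0 < L.get k := hpos _ (L.get_mem _)
  have hcast : (L.get k : ℝ) ≠ 0 := by exact_mod_cast hLk.ne'
  calc ∑ j, (blockMat L h i j) ^ 2
      = ∑ j ∈ Finset.univ.filter (fun j : Fin n => (blockEquiv L h j).1 = k),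
          ((L.get k : ℝ))⁻¹ ^ 2 := by
        rw [Finset.sum_filter]
        apply Finset.sum_congr rfl
        intro j _
        simp only [blockMat, ← hk]
        by_cases hj : (blockEquiv L h j).1 = k
        · rw [if_pos hj.symm, if_pos hj]
        · rw [if_neg (fun h' => hj h'.symm), if_neg hj]
          simp
    _ = (L.get k : ℝ) * ((L.get k : ℝ))⁻¹ ^ 2 := by
        rw [Finset.sum_const, fiber_card, nsmul_eq_mul]
    _ = blockMat L h i i := by
        rw [blockMat_diag, ← hk, sq]
        field_simp


lemma blockMat_isErdos {n : ℕ} (L : List ℕ) (h : L.sum = n) (hpos : ∀ x ∈ L, 0 < x) :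
    IsErdos (blockMat L h) := by
  constructor
  · refine ⟨blockMat_nonneg L h, blockMat_row_sum L h hpos, fun j => ?_⟩
    rw [Finset.sum_congr rfl fun i _ => blockMat_symm L h i j]
    exact blockMat_row_sum L h hpos j
  · have hfrob : frobSq (blockMat L h) = ∑ i, blockMat L h i i :=
      Finset.sum_congr rfl fun i _ => blockMat_rowsq L h hpos i
    have hmax : maxTr (blockMat L h) = ∑ i, blockMat L h i i := by
      apply le_antisymm
      · apply ciSup_le
        intro σ
        exact Finset.sum_le_sum fun i _ => blockMat_le_diag L h i (σ i)
      · have := le_ciSup (f := fun σ : Equiv.Perm (Fin n) => ∑ i, blockMat L h i (σ i))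
          (Set.Finite.bddAbove (Set.finite_range _)) 1
        simpa [maxTr] using this
    rw [hfrob, hmax]

lemma map_count_sum (L : List ℕ) (m : ℕ) :
    (L.map fun x => if x = m then 1 else 0).sum = L.count m := by
  induction L with
  | nil => simp
  | cons a t ih =>
    rw [List.map_cons, List.sum_cons, List.count_cons, ih]
    by_cases h : a = m <;> simp [h, Nat.add_comm]

lemma sum_fiber {n : ℕ} (L : List ℕ) (h : L.sum = n) (g : Fin L.length → ℕ) :
    ∑ i : Fin n, g ((blockEquiv L h i).1) = ∑ k : Fin L.length, L.get k * g k := by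
  classical
  rw [← Equiv.sum_comp (blockEquiv L h).symm (fun i : Fin n => g ((blockEquiv L h i).1))]
  simp only [Equiv.apply_symm_apply]
  rw [← Finset.univ_sigma_univ, Finset.sum_sigma]
  exact Finset.sum_congr rfl fun k _ => by simp [mul_comm]

lemma blockMat_eq_inv_iff {n : ℕ} (L : List ℕ) (h : L.sum = n) {m : ℕ} (hm : 0 < m)
    (i j : Fin n) :
    blockMat L h i j = ((m : ℝ))⁻¹ ↔
      ((blockEquiv L h i).1 = (blockEquiv L h j).1 ∧ L.get (blockEquiv L h i).1 = m) := by
  have hm' : ((m : ℝ))⁻¹ ≠ 0 := by positivity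
  unfold blockMat
  split <;> rename_i hc
  · rw [_root_.inv_inj]
    simp [hc, Nat.cast_inj]
  · constructor
    · intro h0; exact absurd h0.symm hm'
    · intro ⟨h1, _⟩; exact absurd h1 hc

lemma count_blockMat {n : ℕ} (L : List ℕ) (h : L.sum = n) (hpos : ∀ x ∈ L, 0 < x)
    {m : ℕ} (hm : 0 < m) :
    (Finset.univ.filter fun p : Fin n × Fin n =>
      blockMat L h p.1 p.2 = ((m : ℝ))⁻¹).card = m ^ 2 * L.count m := by
  classical
  calc (Finset.univ.filter fun p : Fin n × Fin n =>
      blockMat L h p.1 p.2 = ((m : ℝ))⁻¹).card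
      = ∑ i : Fin n, ∑ j : Fin n,
          if ((blockEquiv L h i).1 = (blockEquiv L h j).1 ∧
              L.get (blockEquiv L h i).1 = m) then 1 else 0 := by
        rw [Finset.card_filter, Fintype.sum_prod_type]
        exact Finset.sum_congr rfl fun i _ => Finset.sum_congr rfl fun j _ =>
          if_congr (blockMat_eq_inv_iff L h hm i j) rfl rfl
    _ = ∑ i : Fin n, (if L.get (blockEquiv L h i).1 = m then m else 0) := by
        refine Finset.sum_congr rfl fun i _ => ?_
        by_cases hi : L.get (blockEquiv L h i).1 = m
        · rw [if_pos hi]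
          have hfc := fiber_card L h (blockEquiv L h i).1
          rw [Finset.card_filter] at hfc
          calc (∑ j : Fin n, if ((blockEquiv L h i).1 = (blockEquiv L h j).1 ∧
                  L.get (blockEquiv L h i).1 = m) then 1 else 0)
              = ∑ j : Fin n, if (blockEquiv L h j).1 = (blockEquiv L h i).1 then 1 else 0 := by
                refine Finset.sum_congr rfl fun j _ => if_congr ?_ rfl rfl
                constructor
                · rintro ⟨h1, -⟩; exact h1.symm
                · intro h1; exact ⟨h1.symm, hi⟩
            _ = m := by rw [hfc, hi]
        · rw [if_neg hi]
          refine Finset.sum_eq_zero fun j _ => ?_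
          rw [if_neg]
          rintro ⟨-, h2⟩; exact hi h2
    _ = ∑ k : Fin L.length, L.get k * (if L.get k = m then m else 0) :=
        sum_fiber L h (fun k => if L.get k = m then m else 0)
    _ = m ^ 2 * ∑ k : Fin L.length, (if L.get k = m then 1 else 0) := by
        rw [Finset.mul_sum]
        refine Finset.sum_congr rfl fun k _ => ?_
        by_cases hk : L.get k = m
        · rw [if_pos hk, if_pos hk, hk, sq, mul_one]
        · rw [if_neg hk, if_neg hk]
          simp
    _ = m ^ 2 * L.count m := by
        rw [sum_fin_get L (fun x => if x = m then 1 else 0), map_count_sum]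

lemma count_matEquiv {n : ℕ} {A B : Matrix (Fin n) (Fin n) ℝ} (h : MatEquiv A B) (x : ℝ) :
    (Finset.univ.filter fun p : Fin n × Fin n => A p.1 p.2 = x).card
      = (Finset.univ.filter fun p : Fin n × Fin n => B p.1 p.2 = x).card := by
  classical
  obtain ⟨P, Q, ⟨σ, rfl⟩, ⟨τ, rfl⟩, rfl⟩ := h
  have hA : ∀ i j, ((σ.permMatrix ℝ) * B * (τ.permMatrix ℝ)) i j = B (σ i) (τ.symm j) := by
    intro i j
    rw [Equiv.Perm.permMatrix, Equiv.Perm.permMatrix, Matrix.mul_assoc,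
      PEquiv.toMatrix_toPEquiv_mul, PEquiv.mul_toMatrix_toPEquiv]
    rfl
  apply Finset.card_bij (fun p _ => ((σ p.1), (τ.symm p.2)))
  · intro p hp
    simp only [Finset.mem_filter, Finset.mem_univ, true_and] at hp ⊢
    rw [← hp, hA]
  · intro p hp q hq hpq
    simp only [Prod.mk.injEq] at hpq
    exact Prod.ext (σ.injective hpq.1) (τ.symm.injective hpq.2)
  · intro p hp
    refine ⟨(σ.symm p.1, τ p.2), Finset.mem_filter.mpr ⟨Finset.mem_univ _, ?_⟩, by simp⟩
    simp only [Finset.mem_filter, Finset.mem_univ, true_and] at hp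
    rw [hA]
    simpa using hp


theorem erdos_count_lower_bound (n : ℕ) (hn : 1 ≤ n) :
    ∃ f : Fin (Fintype.card (Nat.Partition n)) → Matrix (Fin n) (Fin n) ℝ,
      (∀ i, IsErdos (f i)) ∧ ∀ i j, i ≠ j → ¬ MatEquiv (f i) (f j) := by
  classical
  set eP : Fin (Fintype.card (Nat.Partition n)) ≃ Nat.Partition n :=
    (Fintype.equivFin (Nat.Partition n)).symm with heP
  have hsum : ∀ P : Nat.Partition n, (P.parts.toList).sum = n := by
    intro P
    rw [Multiset.sum_toList]
    exact P.parts_sum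
  have hpos : ∀ P : Nat.Partition n, ∀ x ∈ P.parts.toList, 0 < x := by
    intro P x hx
    exact P.parts_pos (by rwa [← Multiset.mem_toList])
  refine ⟨fun i => blockMat ((eP i).parts.toList) (hsum (eP i)), fun i => blockMat_isErdos _ _ (hpos _), ?_⟩
  intro i j hij hequiv
  have hPQ : eP i ≠ eP j := fun h => hij (eP.injective h)
  have hparts : (eP i).parts ≠ (eP j).parts := by
    intro h
    exact hPQ (Nat.Partition.ext h)
  obtain ⟨m, hm⟩ : ∃ m, Multiset.count m (eP i).parts ≠ Multiset.count m (eP j).parts := by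
    by_contra hc
    push_neg at hc
    exact hparts (Multiset.ext.mpr hc)
  have hm0 : 0 < m := by
    rcases Nat.eq_zero_or_pos m with rfl | h
    · exfalso
      apply hm
      rw [Multiset.count_eq_zero_of_notMem, Multiset.count_eq_zero_of_notMem]
      · intro hmem; exact absurd rfl ((eP j).parts_pos hmem).ne'
      · intro hmem; exact absurd rfl ((eP i).parts_pos hmem).ne'
    · exact h
  have hcount : ∀ P : Nat.Partition n, (P.parts.toList).count m = Multiset.count m P.parts := by
    intro P
    rw [← Multiset.coe_count, Multiset.coe_toList]
  have h1 := count_blockMat ((eP i).parts.toList) (hsum (eP i)) (hpos _) hm0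
  have h2 := count_blockMat ((eP j).parts.toList) (hsum (eP j)) (hpos _) hm0
  have h3 := count_matEquiv hequiv ((m : ℝ))⁻¹
  rw [h1, h2, hcount, hcount] at h3
  exact hm (Nat.eq_of_mul_eq_mul_left (by positivity) h3)
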